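/- Let M ∈ ℝ^{3×3} be a fixed matrix and let R̃ : ℝ → ℝ^{3×3} and ω : ℝ → ℝ³ be such that R̃ is differentiable with Ṙ̃(t) = −[ω(t)]× R̃(t). Then the function t ↦ (1/4)·Tr((I₃ − R̃(t))·M) is differentiable with derivative −(1/2)·Υ(R̃(t)M)ᵀ ω(t). -/

import Mathlib

open Matrix Filter

noncomputable section

/-- Skew-symmetric matrix of a vector: `skew ω *ᵥ v = ω ×₃ v`. -/
def skew (ω : Fin 3 → ℝ) : Matrix (Fin 3) (Fin 3) ℝ :=
  !![0, -ω 2, ω 1; ω 2, 0, -ω 0; -ω 1, ω 0, 0]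

/-- Inverse of `skew` on skew-symmetric matrices. -/
def vex (M : Matrix (Fin 3) (Fin 3) ℝ) : Fin 3 → ℝ :=
  ![M 2 1, M 0 2, M 1 0]

/-- Anti-symmetric projection `P_a(M) = (M - Mᵀ)/2`. -/
def Pa (M : Matrix (Fin 3) (Fin 3) ℝ) : Matrix (Fin 3) (Fin 3) ℝ :=
  (1 / 2 : ℝ) • (M - Mᵀ)

/-- `Υ(M) = vex (P_a M)`. -/
def Upsilon (M : Matrix (Fin 3) (Fin 3) ℝ) : Fin 3 → ℝ := vex (Pa M)

/-- `R ∈ SO(3)`. -/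
def SO3 (R : Matrix (Fin 3) (Fin 3) ℝ) : Prop :=
  R * Rᵀ = 1 ∧ Rᵀ * R = 1 ∧ R.det = 1

/-- `‖R‖_I = Tr(I₃ - R)/4`. -/
def normI (R : Matrix (Fin 3) (Fin 3) ℝ) : ℝ := Matrix.trace (1 - R) / 4

/-- Squared Euclidean norm of a vector of `ℝ³`. -/
def sqnorm (v : Fin 3 → ℝ) : ℝ := ∑ i, v i ^ 2

/-- Entrywise derivative of a matrix-valued function. -/
def HasMatDerivAt (R : ℝ → Matrix (Fin 3) (Fin 3) ℝ)
    (R' : Matrix (Fin 3) (Fin 3) ℝ) (t : ℝ) : Prop :=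
  ∀ i j, HasDerivAt (fun s => R s i j) (R' i j) t

theorem deriv_trace_lyapunov (M : Matrix (Fin 3) (Fin 3) ℝ)
    (Rt : ℝ → Matrix (Fin 3) (Fin 3) ℝ) (ω : ℝ → Fin 3 → ℝ)
    (hR : ∀ t, HasMatDerivAt Rt (-(skew (ω t) * Rt t)) t) :
    ∀ t, HasDerivAt (fun s => Matrix.trace ((1 - Rt s) * M) / 4)
      (-(1 / 2) * (Upsilon (Rt t * M) ⬝ᵥ ω t)) t := by
  intro t
  have h1 : HasDerivAt
      (fun s => (∑ i : Fin 3, ∑ k : Fin 3,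
        ((1 : Matrix (Fin 3) (Fin 3) ℝ) i k - Rt s i k) * M k i) / 4)
      ((∑ i : Fin 3, ∑ k : Fin 3,
        (0 - (-(skew (ω t) * Rt t)) i k) * M k i) / 4) t := by
    refine HasDerivAt.div_const ?_ 4
    refine HasDerivAt.fun_sum fun i _ => HasDerivAt.fun_sum fun k _ => ?_
    exact ((hasDerivAt_const t _).sub (hR t i k)).mul_const _
  have heq : (fun s => Matrix.trace ((1 - Rt s) * M) / 4)
      = fun s => (∑ i : Fin 3, ∑ k : Fin 3,
        ((1 : Matrix (Fin 3) (Fin 3) ℝ) i k - Rt s i k) * M k i) / 4 := by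
    funext s
    simp [Matrix.trace, Matrix.mul_apply, Matrix.diag, Matrix.sub_apply]
  rw [heq]
  convert h1 using 1
  simp only [Upsilon, vex, Pa, skew, dotProduct, Matrix.mul_apply,
    Matrix.neg_apply, Matrix.smul_apply, Matrix.sub_apply, Matrix.transpose_apply,
    Fin.sum_univ_three, Matrix.cons_val', Matrix.cons_val_zero, Matrix.cons_val_one,
    Matrix.head_cons, Matrix.cons_val_fin_one, Matrix.empty_val',
    Matrix.head_fin_const, Matrix.cons_val_two, Matrix.tail_cons, smul_eq_mul,
    Matrix.of_apply]
  ring
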